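/- Let γ ⊂ ℝ^d be locally finite and satisfy the density condition with constant a > 0 for interaction radius r > 0, and let {V_{xy}} be an admissible family with interaction radius r and Lipschitz constant C > 0. Fix α^* > 0. Then there exists a constant L > 0 (depending only on C, a, r, α^*) such that for all 0 < α < β ≤ α^* and all q′, q′′ : γ → ℝ with ‖q′‖_α, ‖q′′‖_α < ∞, the family (|V̄_x(q′) − V̄_x(q′′)|² e^{−β|x|})_{x∈γ} is summable and ∑_{x∈γ} |V̄_x(q′) − V̄_x(q′′)|² e^{−β|x|} ≤ L² (β − α)^{−1} ∑_{x∈γ} |q′_x − q′′_x|² e^{−α|x|}. -/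

import Mathlib

open scoped BigOperators

noncomputable section

/-- The finite set `γ_{x,r} = {y ∈ γ : |x - y| < r}` of points of `γ` within
distance `r` of `x`, given local finiteness of `γ`. -/
def nbhd {d : ℕ} (γ : Set (EuclideanSpace ℝ (Fin d)))
    (hLF : ∀ (x : EuclideanSpace ℝ (Fin d)) (R : ℝ), {y ∈ γ | dist x y < R}.Finite)
    (r : ℝ) (x : EuclideanSpace ℝ (Fin d)) : Finset (EuclideanSpace ℝ (Fin d)) :=
  (hLF x r).toFinset

/-- `n_{x,r}(γ)`, the number of points of `γ` within distance `r` of `x`. -/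
def npts {d : ℕ} (γ : Set (EuclideanSpace ℝ (Fin d)))
    (hLF : ∀ (x : EuclideanSpace ℝ (Fin d)) (R : ℝ), {y ∈ γ | dist x y < R}.Finite)
    (r : ℝ) (x : EuclideanSpace ℝ (Fin d)) : ℕ :=
  (nbhd γ hLF r x).card

/-- `V̄_x(q) = ∑_{y ∈ γ_{x,r}} V_{xy}(q_x, q_y)`. -/
def Vbar {d : ℕ} (γ : Set (EuclideanSpace ℝ (Fin d)))
    (hLF : ∀ (x : EuclideanSpace ℝ (Fin d)) (R : ℝ), {y ∈ γ | dist x y < R}.Finite)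
    (V : EuclideanSpace ℝ (Fin d) → EuclideanSpace ℝ (Fin d) → ℝ → ℝ → ℝ)
    (r : ℝ) (q : EuclideanSpace ℝ (Fin d) → ℝ) (x : EuclideanSpace ℝ (Fin d)) : ℝ :=
  ∑ y ∈ nbhd γ hLF r x, V x y (q x) (q y)

attribute [local instance] Classical.decEq Classical.propDecidable

lemma decay_aux {ε M t : ℝ} (hε : 0 < ε) (hεM : ε ≤ M) (ht : 0 ≤ t) :
    (1 + t) * Real.exp (-(ε * t)) ≤ (1 + M) / ε := by
  have hexp : Real.exp (-(ε * t)) ≤ 1 := by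
    calc Real.exp (-(ε * t)) ≤ Real.exp 0 := by
          apply Real.exp_le_exp.mpr; nlinarith
      _ = 1 := Real.exp_zero
  have key : ε * t * Real.exp (-(ε * t)) ≤ 1 := by
    have h3 := Real.add_one_le_exp (ε * t)
    have h4 : Real.exp (ε * t) * Real.exp (-(ε * t)) = 1 := by
      rw [← Real.exp_add]; simp
    nlinarith [Real.exp_pos (-(ε * t))]
  rw [le_div_iff₀ hε]
  nlinarith [Real.exp_pos (-(ε * t))]

section aux
variable {d : ℕ} (γ : Set (EuclideanSpace ℝ (Fin d)))
  (hLF : ∀ (x : EuclideanSpace ℝ (Fin d)) (R : ℝ), {y ∈ γ | dist x y < R}.Finite)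
  (r : ℝ)

/-- subtype version of nbhd -/
noncomputable def nbhdS (x : EuclideanSpace ℝ (Fin d)) : Finset γ :=
  (((hLF x r).preimage (Subtype.val_injective.injOn)).toFinset)

lemma mem_nbhdS (x : EuclideanSpace ℝ (Fin d)) (y : γ) :
    y ∈ nbhdS γ hLF r x ↔ dist x (y : EuclideanSpace ℝ (Fin d)) < r := by
  simp [nbhdS, Set.Finite.mem_toFinset, y.2]

lemma nbhd_eq_image (x : EuclideanSpace ℝ (Fin d)) :
    nbhd γ hLF r x = (nbhdS γ hLF r x).image Subtype.val := by
  ext z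
  simp only [nbhd, Set.Finite.mem_toFinset, Set.mem_setOf_eq, Finset.mem_image]
  constructor
  · rintro ⟨hz, hdz⟩
    exact ⟨⟨z, hz⟩, (mem_nbhdS γ hLF r x ⟨z, hz⟩).mpr hdz, rfl⟩
  · rintro ⟨y, hy, rfl⟩
    exact ⟨y.2, (mem_nbhdS γ hLF r x y).mp hy⟩

lemma sum_nbhd (x : EuclideanSpace ℝ (Fin d)) (f : EuclideanSpace ℝ (Fin d) → ℝ) :
    ∑ y ∈ nbhd γ hLF r x, f y = ∑ y ∈ nbhdS γ hLF r x, f ↑y := by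
  rw [nbhd_eq_image]
  exact Finset.sum_image (fun u _ v _ h => Subtype.val_injective h)

lemma card_nbhdS (x : EuclideanSpace ℝ (Fin d)) :
    (nbhdS γ hLF r x).card = npts γ hLF r x := by
  rw [npts, nbhd_eq_image, Finset.card_image_of_injective _ Subtype.val_injective]

lemma mem_nbhd_prop {x z : EuclideanSpace ℝ (Fin d)} (hz : z ∈ nbhd γ hLF r x) :
    z ∈ γ ∧ dist x z < r := by
  simpa [nbhd, Set.Finite.mem_toFinset] using hz

end aux

set_option maxHeartbeats 2000000 in
theorem statement1 (C a r αS : ℝ) (hC : 0 < C) (ha : 0 < a) (hr : 0 < r) (hαS : 0 < αS) :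
    ∃ L > (0 : ℝ), ∀ (d : ℕ), 1 ≤ d → ∀ (γ : Set (EuclideanSpace ℝ (Fin d))),
      γ.Countable →
      ∀ (hLF : ∀ (x : EuclideanSpace ℝ (Fin d)) (R : ℝ), {y ∈ γ | dist x y < R}.Finite),
      (∀ x : EuclideanSpace ℝ (Fin d), (npts γ hLF r x : ℝ) ≤ a * Real.sqrt (1 + ‖x‖)) →
      ∀ (V : EuclideanSpace ℝ (Fin d) → EuclideanSpace ℝ (Fin d) → ℝ → ℝ → ℝ),
      (∀ x ∈ γ, ∀ y ∈ γ, r ≤ dist x y → ∀ s t : ℝ, V x y s t = 0) →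
      (∀ x ∈ γ, ∀ y ∈ γ, ∀ q1 q2 q1' q2' : ℝ,
        |V x y q1 q2 - V x y q1' q2'| ≤ C * (|q1 - q1'| + |q2 - q2'|)) →
      ∀ α β : ℝ, 0 < α → α < β → β ≤ αS →
      ∀ q' q'' : EuclideanSpace ℝ (Fin d) → ℝ,
      Summable (fun y : γ => (q' y) ^ 2 * Real.exp (-α * ‖(y : EuclideanSpace ℝ (Fin d))‖)) →
      Summable (fun y : γ => (q'' y) ^ 2 * Real.exp (-α * ‖(y : EuclideanSpace ℝ (Fin d))‖)) →
      Summable (fun x : γ => (Vbar γ hLF V r q' x - Vbar γ hLF V r q'' x) ^ 2 *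
          Real.exp (-β * ‖(x : EuclideanSpace ℝ (Fin d))‖)) ∧
      ∑' x : γ, (Vbar γ hLF V r q' x - Vbar γ hLF V r q'' x) ^ 2 *
          Real.exp (-β * ‖(x : EuclideanSpace ℝ (Fin d))‖)
        ≤ L ^ 2 * (β - α)⁻¹ *
          ∑' x : γ, (q' x - q'' x) ^ 2 * Real.exp (-α * ‖(x : EuclideanSpace ℝ (Fin d))‖) := by
  classical
  set K1 : ℝ := 2 * C ^ 2 * a ^ 2 * (1 + αS) with hK1def
  set D : ℝ := 2 * C ^ 2 * a * Real.sqrt (1 + r) * Real.exp (αS * r) with hDdef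
  have hsr : (0:ℝ) < Real.sqrt (1 + r) := Real.sqrt_pos.mpr (by linarith)
  have hK1 : 0 < K1 := by positivity
  have hD : 0 < D := by positivity
  have hL2pos : 0 < K1 + a * D * (1 + αS) := by positivity
  refine ⟨Real.sqrt (K1 + a * D * (1 + αS)), Real.sqrt_pos.mpr hL2pos, ?_⟩
  intro d hd γ hγc hLF hdens V hV0 hVlip α β hα hαβ hβ q' q'' hq' hq''
  have hL2 : (Real.sqrt (K1 + a * D * (1 + αS))) ^ 2 = K1 + a * D * (1 + αS) :=
    Real.sq_sqrt hL2pos.le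
  set ε : ℝ := β - α with hεdef
  have hε : 0 < ε := by simp only [hεdef]; linarith
  have hεM : ε ≤ αS := by simp only [hεdef]; linarith
  -- summability of the difference weights
  have hu : Summable (fun y : γ =>
      (q' ↑y - q'' ↑y) ^ 2 * Real.exp (-α * ‖(y : EuclideanSpace ℝ (Fin d))‖)) := by
    have hmaj : Summable (fun y : γ =>
        2 * ((q' ↑y) ^ 2 * Real.exp (-α * ‖(y : EuclideanSpace ℝ (Fin d))‖))
        + 2 * ((q'' ↑y) ^ 2 * Real.exp (-α * ‖(y : EuclideanSpace ℝ (Fin d))‖))) :=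
      (hq'.mul_left 2).add (hq''.mul_left 2)
    refine Summable.of_nonneg_of_le (fun y => by positivity) (fun y => ?_) hmaj
    have hp := Real.exp_pos (-α * ‖(y : EuclideanSpace ℝ (Fin d))‖)
    nlinarith [mul_nonneg (sq_nonneg (q' ↑y + q'' ↑y)) hp.le]
  set S : ℝ := ∑' y : γ,
      (q' ↑y - q'' ↑y) ^ 2 * Real.exp (-α * ‖(y : EuclideanSpace ℝ (Fin d))‖) with hSdef
  -- the y-weight
  set c : EuclideanSpace ℝ (Fin d) → ℝ := fun z =>
    D * (Real.sqrt (1 + ‖z‖) * Real.exp (-β * ‖z‖)) * (q' z - q'' z) ^ 2 with hcdef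
  have hc0 : ∀ z, 0 ≤ c z := fun z => by simp only [hcdef]; positivity
  -- exp splitting
  have hexpsplit : ∀ t : ℝ, Real.exp (-β * t) = Real.exp (-(ε * t)) * Real.exp (-α * t) := by
    intro t
    rw [← Real.exp_add]
    congr 1
    simp only [hεdef]; ring
  -- the double array
  set g : γ × γ → ℝ := fun p =>
    if dist (↑p.2 : EuclideanSpace ℝ (Fin d)) ↑p.1 < r then c ↑p.1 else 0 with hgdef
  have hg0 : ∀ p, 0 ≤ g p := by
    intro p; simp only [hgdef]
    split
    · exact hc0 _
    · exact le_refl 0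
  -- fibers of g in x, for fixed y
  have hfib0 : ∀ y : γ, ∀ x : γ, x ∉ nbhdS γ hLF r ↑y → g (y, x) = 0 := by
    intro y x hx
    simp only [hgdef]
    rw [if_neg]
    intro h
    exact hx ((mem_nbhdS γ hLF r ↑y x).mpr (by rwa [dist_comm]))
  have hgfib_sum : ∀ y : γ, Summable (fun x : γ => g (y, x)) :=
    fun y => summable_of_ne_finset_zero (hfib0 y)
  have hgfib_tsum : ∀ y : γ, ∑' x : γ, g (y, x) = (npts γ hLF r ↑y : ℝ) * c ↑y := by
    intro y
    rw [tsum_eq_sum (hfib0 y)]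
    have hall : ∀ x ∈ nbhdS γ hLF r ↑y, g (y, x) = c ↑y := by
      intro x hx
      simp only [hgdef]
      rw [if_pos]
      rw [dist_comm]
      exact (mem_nbhdS γ hLF r ↑y x).mp hx
    rw [Finset.sum_congr rfl hall, Finset.sum_const, card_nbhdS, nsmul_eq_mul]
  -- bound on the y-marginal
  have hcf_le : ∀ y : γ, (npts γ hLF r ↑y : ℝ) * c ↑y
      ≤ (a * D * (1 + αS) / ε) *
        ((q' ↑y - q'' ↑y) ^ 2 * Real.exp (-α * ‖(y : EuclideanSpace ℝ (Fin d))‖)) := by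
    intro y
    set t : ℝ := ‖(y : EuclideanSpace ℝ (Fin d))‖ with htdef
    have ht : 0 ≤ t := norm_nonneg _
    have hsq : Real.sqrt (1 + t) * Real.sqrt (1 + t) = 1 + t :=
      Real.mul_self_sqrt (by linarith)
    have h1 : (npts γ hLF r ↑y : ℝ) ≤ a * Real.sqrt (1 + t) := hdens ↑y
    have hdec := decay_aux hε hεM ht
    calc (npts γ hLF r ↑y : ℝ) * c ↑y
        ≤ (a * Real.sqrt (1 + t)) * c ↑y :=
          mul_le_mul_of_nonneg_right h1 (hc0 _)
      _ = a * D * ((Real.sqrt (1 + t) * Real.sqrt (1 + t)) * Real.exp (-(ε * t))) *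
            ((q' ↑y - q'' ↑y) ^ 2 * Real.exp (-α * t)) := by
          simp only [hcdef]
          rw [hexpsplit t]; ring
      _ ≤ a * D * ((1 + αS) / ε) *
            ((q' ↑y - q'' ↑y) ^ 2 * Real.exp (-α * t)) := by
          have hdec' : (Real.sqrt (1 + t) * Real.sqrt (1 + t)) * Real.exp (-(ε * t))
              ≤ (1 + αS) / ε := by rw [hsq]; exact hdec
          gcongr
      _ = (a * D * (1 + αS) / ε) *
            ((q' ↑y - q'' ↑y) ^ 2 * Real.exp (-α * t)) := by ring
  have hcf_sum : Summable (fun y : γ => (npts γ hLF r ↑y : ℝ) * c ↑y) := by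
    refine Summable.of_nonneg_of_le
      (fun y => mul_nonneg (Nat.cast_nonneg _) (hc0 _)) hcf_le (hu.mul_left _)
  have hcf_tsum_le : ∑' y : γ, (npts γ hLF r ↑y : ℝ) * c ↑y
      ≤ (a * D * (1 + αS) / ε) * S := by
    calc ∑' y : γ, (npts γ hLF r ↑y : ℝ) * c ↑y
        ≤ ∑' y : γ, (a * D * (1 + αS) / ε) *
            ((q' ↑y - q'' ↑y) ^ 2 * Real.exp (-α * ‖(y : EuclideanSpace ℝ (Fin d))‖)) :=
          Summable.tsum_le_tsum hcf_le hcf_sum (hu.mul_left _)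
      _ = (a * D * (1 + αS) / ε) * S := by rw [tsum_mul_left]
  -- summability of g on the product
  have hg_sum : Summable g := by
    refine (summable_prod_of_nonneg hg0).mpr ⟨hgfib_sum, ?_⟩
    exact (summable_congr hgfib_tsum).mpr hcf_sum
  have he_sum : Summable (fun p : γ × γ => g p.swap) := hg_sum.prod_symm
  -- fibers in y for fixed x
  have hBfib0 : ∀ x : γ, ∀ y : γ, y ∉ nbhdS γ hLF r ↑x → g (Prod.swap (x, y)) = 0 := by
    intro x y hy
    simp only [hgdef, Prod.swap]
    rw [if_neg]
    intro h
    exact hy ((mem_nbhdS γ hLF r ↑x y).mpr h)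
  have hB : ∀ x : γ, ∑' y : γ, g (Prod.swap (x, y)) = ∑ y ∈ nbhd γ hLF r ↑x, c y := by
    intro x
    rw [tsum_eq_sum (hBfib0 x), sum_nbhd γ hLF r ↑x c]
    refine Finset.sum_congr rfl (fun y hy => ?_)
    simp only [hgdef, Prod.swap]
    rw [if_pos ((mem_nbhdS γ hLF r ↑x y).mp hy)]
  have hBsum : Summable (fun x : γ => ∑ y ∈ nbhd γ hLF r ↑x, c y) := by
    have := ((summable_prod_of_nonneg (fun p => hg0 p.swap)).mp he_sum).2
    exact (summable_congr hB).mp this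
  have hBtsum : ∑' x : γ, ∑ y ∈ nbhd γ hLF r ↑x, c y ≤ (a * D * (1 + αS) / ε) * S := by
    have h1 : ∑' x : γ, ∑ y ∈ nbhd γ hLF r ↑x, c y
        = ∑' x : γ, ∑' y : γ, g (Prod.swap (x, y)) := (tsum_congr hB).symm
    have h2 : ∑' x : γ, ∑' y : γ, g (Prod.swap (x, y)) = ∑' p : γ × γ, g p.swap :=
      (Summable.tsum_prod he_sum).symm
    have h3 : ∑' p : γ × γ, g p.swap = ∑' p : γ × γ, g p := by
      have := (Equiv.prodComm ↥γ ↥γ).tsum_eq g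
      simpa [Equiv.coe_prodComm] using this
    have h4 : ∑' p : γ × γ, g p = ∑' y : γ, ∑' x : γ, g (y, x) := Summable.tsum_prod hg_sum
    rw [h1, h2, h3, h4, tsum_congr hgfib_tsum]
    exact hcf_tsum_le
  -- pointwise estimate
  have hpt : ∀ x : γ,
      (Vbar γ hLF V r q' ↑x - Vbar γ hLF V r q'' ↑x) ^ 2 *
        Real.exp (-β * ‖(x : EuclideanSpace ℝ (Fin d))‖)
      ≤ (K1 / ε) * ((q' ↑x - q'' ↑x) ^ 2 *
          Real.exp (-α * ‖(x : EuclideanSpace ℝ (Fin d))‖))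
        + ∑ y ∈ nbhd γ hLF r ↑x, c y := by
    intro x
    have ht : (0:ℝ) ≤ ‖(x : EuclideanSpace ℝ (Fin d))‖ := norm_nonneg _
    have hβpos : 0 < β := lt_trans hα hαβ
    have habs : |Vbar γ hLF V r q' ↑x - Vbar γ hLF V r q'' ↑x|
        ≤ ∑ y ∈ nbhd γ hLF r ↑x, C * (|q' ↑x - q'' ↑x| + |q' y - q'' y|) := by
      have hrw : Vbar γ hLF V r q' ↑x - Vbar γ hLF V r q'' ↑x
          = ∑ y ∈ nbhd γ hLF r ↑x,
              (V (↑x) y (q' ↑x) (q' y) - V (↑x) y (q'' ↑x) (q'' y)) := by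
        simp only [Vbar, Finset.sum_sub_distrib]
      rw [hrw]
      refine (Finset.abs_sum_le_sum_abs _ _).trans (Finset.sum_le_sum (fun y hy => ?_))
      exact hVlip (↑x) x.2 y (mem_nbhd_prop γ hLF r hy).1 _ _ _ _
    have hCS : (Vbar γ hLF V r q' ↑x - Vbar γ hLF V r q'' ↑x) ^ 2
        ≤ (npts γ hLF r ↑x : ℝ) *
          ∑ y ∈ nbhd γ hLF r ↑x, (C * (|q' ↑x - q'' ↑x| + |q' y - q'' y|)) ^ 2 := by
      have h2 : (Vbar γ hLF V r q' ↑x - Vbar γ hLF V r q'' ↑x) ^ 2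
          ≤ (∑ y ∈ nbhd γ hLF r ↑x, C * (|q' ↑x - q'' ↑x| + |q' y - q'' y|)) ^ 2 := by
        rw [← sq_abs]
        exact pow_le_pow_left₀ (abs_nonneg _) habs 2
      refine h2.trans ?_
      have h3 := Finset.sum_mul_sq_le_sq_mul_sq (nbhd γ hLF r ↑x)
        (fun _ => (1:ℝ)) (fun y => C * (|q' ↑x - q'' ↑x| + |q' y - q'' y|))
      simp only [one_mul, one_pow, Finset.sum_const, nsmul_eq_mul, mul_one] at h3
      simpa [npts] using h3
    have hterm : ∀ y ∈ nbhd γ hLF r ↑x,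
        (C * (|q' ↑x - q'' ↑x| + |q' y - q'' y|)) ^ 2
        ≤ 2 * C ^ 2 * ((q' ↑x - q'' ↑x) ^ 2 + (q' y - q'' y) ^ 2) := by
      intro y _
      have e1 : |q' ↑x - q'' ↑x| ^ 2 = (q' ↑x - q'' ↑x) ^ 2 := sq_abs _
      have e2 : |q' y - q'' y| ^ 2 = (q' y - q'' y) ^ 2 := sq_abs _
      nlinarith [sq_nonneg (C * (|q' ↑x - q'' ↑x| - |q' y - q'' y|)), sq_nonneg C]
    have hkey : (Vbar γ hLF V r q' ↑x - Vbar γ hLF V r q'' ↑x) ^ 2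
        ≤ (npts γ hLF r ↑x : ℝ) ^ 2 * (2 * C ^ 2 * (q' ↑x - q'' ↑x) ^ 2)
          + (npts γ hLF r ↑x : ℝ) *
            (2 * C ^ 2 * ∑ y ∈ nbhd γ hLF r ↑x, (q' y - q'' y) ^ 2) := by
      refine hCS.trans ?_
      have h4 := Finset.sum_le_sum hterm
      have h5 : (npts γ hLF r ↑x : ℝ) *
            ∑ y ∈ nbhd γ hLF r ↑x, (C * (|q' ↑x - q'' ↑x| + |q' y - q'' y|)) ^ 2
          ≤ (npts γ hLF r ↑x : ℝ) *
            ∑ y ∈ nbhd γ hLF r ↑x,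
              2 * C ^ 2 * ((q' ↑x - q'' ↑x) ^ 2 + (q' y - q'' y) ^ 2) :=
        mul_le_mul_of_nonneg_left h4 (Nat.cast_nonneg _)
      refine h5.trans (le_of_eq ?_)
      simp only [mul_add, Finset.sum_add_distrib, Finset.sum_const, nsmul_eq_mul,
        Finset.mul_sum, npts]
      ring
    have hF1 : (npts γ hLF r ↑x : ℝ) ^ 2 * (2 * C ^ 2 * (q' ↑x - q'' ↑x) ^ 2) *
          Real.exp (-β * ‖(x : EuclideanSpace ℝ (Fin d))‖)
        ≤ (K1 / ε) * ((q' ↑x - q'' ↑x) ^ 2 *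
          Real.exp (-α * ‖(x : EuclideanSpace ℝ (Fin d))‖)) := by
      set t : ℝ := ‖(x : EuclideanSpace ℝ (Fin d))‖ with htdef
      have hsq : Real.sqrt (1 + t) * Real.sqrt (1 + t) = 1 + t :=
        Real.mul_self_sqrt (by linarith)
      have hn2 : (npts γ hLF r ↑x : ℝ) ^ 2 ≤ a ^ 2 * (1 + t) := by
        have := pow_le_pow_left₀ (Nat.cast_nonneg _) (hdens ↑x) 2
        calc (npts γ hLF r ↑x : ℝ) ^ 2 ≤ (a * Real.sqrt (1 + t)) ^ 2 := this
          _ = a ^ 2 * (1 + t) := by rw [mul_pow, Real.sq_sqrt (by linarith : (0:ℝ) ≤ 1 + t)]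
      have hdec := decay_aux hε hεM ht
      calc (npts γ hLF r ↑x : ℝ) ^ 2 * (2 * C ^ 2 * (q' ↑x - q'' ↑x) ^ 2) * Real.exp (-β * t)
          ≤ (a ^ 2 * (1 + t)) * (2 * C ^ 2 * (q' ↑x - q'' ↑x) ^ 2) * Real.exp (-β * t) := by
            gcongr
        _ = (2 * C ^ 2 * a ^ 2) * ((1 + t) * Real.exp (-(ε * t))) *
              ((q' ↑x - q'' ↑x) ^ 2 * Real.exp (-α * t)) := by
            rw [hexpsplit t]; ring
        _ ≤ (2 * C ^ 2 * a ^ 2) * ((1 + αS) / ε) *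
              ((q' ↑x - q'' ↑x) ^ 2 * Real.exp (-α * t)) := by
            gcongr
        _ = (K1 / ε) * ((q' ↑x - q'' ↑x) ^ 2 * Real.exp (-α * t)) := by
            simp only [hK1def]; ring
    have hterm2 : ∀ y ∈ nbhd γ hLF r ↑x,
        (npts γ hLF r ↑x : ℝ) * (2 * C ^ 2 * (q' y - q'' y) ^ 2) *
          Real.exp (-β * ‖(x : EuclideanSpace ℝ (Fin d))‖) ≤ c y := by
      intro y hy
      set t : ℝ := ‖(x : EuclideanSpace ℝ (Fin d))‖ with htdef
      obtain ⟨hyγ, hdxy⟩ := mem_nbhd_prop γ hLF r hy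
      have hty : (0:ℝ) ≤ ‖y‖ := norm_nonneg _
      have hnorm : |t - ‖y‖| < r := by
        refine lt_of_le_of_lt ?_ hdxy
        rw [dist_eq_norm]
        exact abs_norm_sub_norm_le _ _
      obtain ⟨hn1, hn2⟩ := abs_lt.mp hnorm
      have hnle : (npts γ hLF r ↑x : ℝ)
          ≤ a * (Real.sqrt (1 + r) * Real.sqrt (1 + ‖y‖)) := by
        refine (hdens ↑x).trans ?_
        have h6 : (1:ℝ) + t ≤ (1 + r) * (1 + ‖y‖) := by nlinarith
        have h7 : Real.sqrt (1 + t) ≤ Real.sqrt ((1 + r) * (1 + ‖y‖)) :=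
          Real.sqrt_le_sqrt h6
        rw [Real.sqrt_mul (by linarith : (0:ℝ) ≤ 1 + r)] at h7
        exact mul_le_mul_of_nonneg_left h7 ha.le
      have hexp2 : Real.exp (-β * t) ≤ Real.exp (αS * r) * Real.exp (-β * ‖y‖) := by
        rw [← Real.exp_add]
        apply Real.exp_le_exp.mpr
        nlinarith [mul_le_mul_of_nonneg_left hn1.le hβpos.le,
          mul_le_mul_of_nonneg_right hβ hr.le]
      calc (npts γ hLF r ↑x : ℝ) * (2 * C ^ 2 * (q' y - q'' y) ^ 2) * Real.exp (-β * t)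
          ≤ (a * (Real.sqrt (1 + r) * Real.sqrt (1 + ‖y‖))) *
              (2 * C ^ 2 * (q' y - q'' y) ^ 2) *
              (Real.exp (αS * r) * Real.exp (-β * ‖y‖)) := by
            gcongr
        _ = c y := by simp only [hcdef, hDdef]; ring
    have hsplit : (npts γ hLF r ↑x : ℝ) *
          (2 * C ^ 2 * ∑ y ∈ nbhd γ hLF r ↑x, (q' y - q'' y) ^ 2) *
          Real.exp (-β * ‖(x : EuclideanSpace ℝ (Fin d))‖)
        = ∑ y ∈ nbhd γ hLF r ↑x,
            (npts γ hLF r ↑x : ℝ) * (2 * C ^ 2 * (q' y - q'' y) ^ 2) *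
              Real.exp (-β * ‖(x : EuclideanSpace ℝ (Fin d))‖) := by
      rw [Finset.mul_sum, Finset.mul_sum, Finset.sum_mul]
    calc (Vbar γ hLF V r q' ↑x - Vbar γ hLF V r q'' ↑x) ^ 2 *
          Real.exp (-β * ‖(x : EuclideanSpace ℝ (Fin d))‖)
        ≤ ((npts γ hLF r ↑x : ℝ) ^ 2 * (2 * C ^ 2 * (q' ↑x - q'' ↑x) ^ 2)
            + (npts γ hLF r ↑x : ℝ) *
              (2 * C ^ 2 * ∑ y ∈ nbhd γ hLF r ↑x, (q' y - q'' y) ^ 2)) *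
            Real.exp (-β * ‖(x : EuclideanSpace ℝ (Fin d))‖) :=
          mul_le_mul_of_nonneg_right hkey (Real.exp_pos _).le
      _ = (npts γ hLF r ↑x : ℝ) ^ 2 * (2 * C ^ 2 * (q' ↑x - q'' ↑x) ^ 2) *
            Real.exp (-β * ‖(x : EuclideanSpace ℝ (Fin d))‖)
          + ∑ y ∈ nbhd γ hLF r ↑x,
              (npts γ hLF r ↑x : ℝ) * (2 * C ^ 2 * (q' y - q'' y) ^ 2) *
                Real.exp (-β * ‖(x : EuclideanSpace ℝ (Fin d))‖) := by
          rw [add_mul, hsplit]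
      _ ≤ (K1 / ε) * ((q' ↑x - q'' ↑x) ^ 2 *
            Real.exp (-α * ‖(x : EuclideanSpace ℝ (Fin d))‖))
          + ∑ y ∈ nbhd γ hLF r ↑x, c y :=
          add_le_add hF1 (Finset.sum_le_sum hterm2)
  -- final assembly
  have hA_sum : Summable (fun x : γ => (K1 / ε) *
      ((q' ↑x - q'' ↑x) ^ 2 * Real.exp (-α * ‖(x : EuclideanSpace ℝ (Fin d))‖))) :=
    hu.mul_left _
  have hAB_sum : Summable (fun x : γ => (K1 / ε) *
      ((q' ↑x - q'' ↑x) ^ 2 * Real.exp (-α * ‖(x : EuclideanSpace ℝ (Fin d))‖))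
      + ∑ y ∈ nbhd γ hLF r ↑x, c y) := hA_sum.add hBsum
  have hF_sum : Summable (fun x : γ =>
      (Vbar γ hLF V r q' ↑x - Vbar γ hLF V r q'' ↑x) ^ 2 *
        Real.exp (-β * ‖(x : EuclideanSpace ℝ (Fin d))‖)) :=
    Summable.of_nonneg_of_le (fun x => by positivity) hpt hAB_sum
  refine ⟨hF_sum, ?_⟩
  calc ∑' x : γ, (Vbar γ hLF V r q' ↑x - Vbar γ hLF V r q'' ↑x) ^ 2 *
        Real.exp (-β * ‖(x : EuclideanSpace ℝ (Fin d))‖)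
      ≤ ∑' x : γ, ((K1 / ε) *
          ((q' ↑x - q'' ↑x) ^ 2 * Real.exp (-α * ‖(x : EuclideanSpace ℝ (Fin d))‖))
        + ∑ y ∈ nbhd γ hLF r ↑x, c y) := Summable.tsum_le_tsum hpt hF_sum hAB_sum
    _ = (∑' x : γ, (K1 / ε) *
          ((q' ↑x - q'' ↑x) ^ 2 * Real.exp (-α * ‖(x : EuclideanSpace ℝ (Fin d))‖)))
        + ∑' x : γ, ∑ y ∈ nbhd γ hLF r ↑x, c y := Summable.tsum_add hA_sum hBsum
    _ ≤ (K1 / ε) * S + (a * D * (1 + αS) / ε) * S := by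
        rw [tsum_mul_left]
        exact add_le_add_right hBtsum _
    _ = (K1 + a * D * (1 + αS)) * ε⁻¹ * S := by
        field_simp
    _ = Real.sqrt (K1 + a * D * (1 + αS)) ^ 2 * ε⁻¹ * S := by rw [hL2]
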